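/- Let X and U be the spaces ℝᵖ and ℝᵐ, let f : X × U → X be a transition map, let ℓ : X × U → ℝ be a nonnegative stage cost, and let N ≥ 1 be a horizon. For an initial state z ∈ X define the horizon-N value V(z) = inf over control sequences (u(0),…,u(N−1)) of Σ_{τ=0}^{N−1} ℓ(x(τ),u(τ)), where x(0) = z and x(τ+1) = f(x(τ),u(τ)). Suppose the infimum defining V(z) is attained by a sequence u* with trajectory x*, and suppose there exists w ∈ U with ℓ(x*(N), w) = 0. Then V(f(z, u*(0))) ≤ V(z) − ℓ(z, u*(0)). -/

import Mathlib

open Fin.NatCast in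
/-- The predicted state trajectory from initial state `z` under the control
sequence `u = (u(0),…,u(N−1))`: `x(0) = z`, `x(τ+1) = f(x(τ),u(τ))`. -/
noncomputable def mpcTraj {p m N : ℕ} [NeZero N]
    (f : (Fin p → ℝ) → (Fin m → ℝ) → Fin p → ℝ)
    (z : Fin p → ℝ) (u : Fin N → Fin m → ℝ) : ℕ → Fin p → ℝ
  | 0 => z
  | τ + 1 => f (mpcTraj f z u τ) (u τ)

open Fin.NatCast in
/-- The horizon-`N` cost `Σ_{τ=0}^{N−1} ℓ(x(τ),u(τ))` of the control sequence `u`. -/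
noncomputable def mpcCost {p m N : ℕ} [NeZero N]
    (f : (Fin p → ℝ) → (Fin m → ℝ) → Fin p → ℝ)
    (ℓ : (Fin p → ℝ) → (Fin m → ℝ) → ℝ)
    (z : Fin p → ℝ) (u : Fin N → Fin m → ℝ) : ℝ :=
  ∑ τ ∈ Finset.range N, ℓ (mpcTraj f z u τ) (u τ)

/-- The horizon-`N` value function `V(z) = inf_u Σ_{τ=0}^{N−1} ℓ(x(τ),u(τ))`. -/
noncomputable def mpcValue {p m : ℕ} (N : ℕ) [NeZero N]
    (f : (Fin p → ℝ) → (Fin m → ℝ) → Fin p → ℝ)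
    (ℓ : (Fin p → ℝ) → (Fin m → ℝ) → ℝ)
    (z : Fin p → ℝ) : ℝ :=
  ⨅ u : Fin N → Fin m → ℝ, mpcCost f ℓ z u

open Fin.NatCast in
/-- Recursive-feasibility inequality: if the infimum defining `V(z)` is attained by
`u*` with trajectory `x*`, and some control `w` gives zero terminal stage cost
`ℓ(x*(N),w) = 0`, then `V(f(z,u*(0))) ≤ V(z) − ℓ(z,u*(0))`. -/
theorem stmt15 {p m N : ℕ} [NeZero N]
    (f : (Fin p → ℝ) → (Fin m → ℝ) → Fin p → ℝ)
    (ℓ : (Fin p → ℝ) → (Fin m → ℝ) → ℝ)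
    (hℓ : ∀ x u, 0 ≤ ℓ x u)
    (z : Fin p → ℝ) (ustar : Fin N → Fin m → ℝ)
    (hopt : mpcCost f ℓ z ustar = mpcValue N f ℓ z)
    (w : Fin m → ℝ) (hw : ℓ (mpcTraj f z ustar N) w = 0) :
    mpcValue N f ℓ (f z (ustar 0)) ≤ mpcValue N f ℓ z - ℓ z (ustar 0) := by
  obtain ⟨n, rfl⟩ : ∃ n, N = n + 1 := ⟨N - 1, (Nat.succ_pred_eq_of_pos (NeZero.pos N)).symm⟩
  set u' : Fin (n + 1) → Fin m → ℝ :=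
    fun τ => if h : (τ : ℕ) + 1 < n + 1 then ustar ⟨(τ : ℕ) + 1, h⟩ else w with hu'
  have hcastval : ∀ τ : ℕ, τ < n + 1 → ((τ : ℕ) : Fin (n + 1)).val = τ :=
    fun τ h => Fin.val_cast_of_lt h
  have hmk : ∀ (τ : ℕ) (h : τ < n + 1), (⟨τ, h⟩ : Fin (n + 1)) = ((τ : ℕ) : Fin (n + 1)) := by
    intro τ h
    ext
    simp [Fin.val_cast_of_lt h]
  have key : ∀ τ : ℕ, τ < n + 1 →
      mpcTraj f (f z (ustar 0)) u' τ = mpcTraj f z ustar (τ + 1) := by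
    intro τ
    induction τ with
    | zero =>
      intro _
      show f z (ustar 0) = f (mpcTraj f z ustar 0) (ustar ((0 : ℕ) : Fin (n + 1)))
      simp [mpcTraj]
    | succ τ ih =>
      intro hτ
      have hτ' : τ < n + 1 := Nat.lt_of_succ_lt hτ
      have hu : u' ((τ : ℕ) : Fin (n + 1)) = ustar ((τ + 1 : ℕ) : Fin (n + 1)) := by
        rw [hu']
        simp only [hcastval τ hτ']
        rw [dif_pos hτ, hmk (τ + 1) hτ]
      show f (mpcTraj f (f z (ustar 0)) u' τ) (u' ((τ : ℕ) : Fin (n + 1)))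
          = f (mpcTraj f z ustar (τ + 1)) (ustar ((τ + 1 : ℕ) : Fin (n + 1)))
      rw [ih hτ', hu]
  have hbdd : BddBelow (Set.range (mpcCost (N := n + 1) f ℓ (f z (ustar 0)))) := by
    refine ⟨0, ?_⟩
    rintro _ ⟨u, rfl⟩
    exact Finset.sum_nonneg fun _ _ => hℓ _ _
  have h1 : mpcValue (n + 1) f ℓ (f z (ustar 0)) ≤ mpcCost f ℓ (f z (ustar 0)) u' :=
    ciInf_le hbdd u'
  have hlast : ℓ (mpcTraj f (f z (ustar 0)) u' n) (u' ((n : ℕ) : Fin (n + 1))) = 0 := by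
    have hn : n < n + 1 := Nat.lt_succ_self n
    have hu : u' ((n : ℕ) : Fin (n + 1)) = w := by
      rw [hu']
      simp only [hcastval n hn]
      rw [dif_neg (by omega)]
    rw [hu, key n hn]
    exact hw
  have hcost : mpcCost f ℓ (f z (ustar 0)) u' = mpcCost f ℓ z ustar - ℓ z (ustar 0) := by
    unfold mpcCost
    rw [Finset.sum_range_succ, hlast, add_zero,
      Finset.sum_range_succ' (fun τ : ℕ => ℓ (mpcTraj f z ustar τ) (ustar τ))]
    have h0 : ℓ (mpcTraj f z ustar 0) (ustar ((0 : ℕ) : Fin (n + 1))) = ℓ z (ustar 0) := by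
      simp [mpcTraj]
    rw [h0, add_sub_cancel_right]
    refine Finset.sum_congr rfl fun τ hτ => ?_
    have hτ' : τ < n := Finset.mem_range.mp hτ
    have hτN : τ < n + 1 := by omega
    rw [key τ hτN]
    congr 1
    rw [hu']
    simp only [hcastval τ hτN]
    rw [dif_pos (by omega), hmk (τ + 1) (by omega)]
  rw [← hopt]
  linarith [h1, hcost.le]
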